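/- Let T = (Q, Σ, δ) be a complete, deterministic, invertible synchronous automaton (a G-automaton) with inverse automaton over state set Q̄. For any word x (finite or infinite) over Σ, either the orbit of x under the semigroup action Q* ∘ x equals the orbit under the group action (Q ∪ Q̄)* ∘ x, or both orbits are infinite. -/

import Mathlib

/-- A G-automaton: complete deterministic transition function `δ : Q → A → A × Q`;
invertibility is the hypothesis that each state's output map is a bijection. -/
abbrev Word (A : Type*) := List A ⊕ (ℕ → A)

variable {Q A : Type*}

/-- The state reached after reading the first `n` letters of the stream `ξ` from state `q`. -/
def gstate (δ : Q → A → A × Q) (ξ : ℕ → A) (q : Q) : ℕ → Q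
  | 0 => q
  | n + 1 => (δ (gstate δ ξ q n) (ξ n)).2

/-- The action of a state on an infinite word. -/
def gactS (δ : Q → A → A × Q) (q : Q) (ξ : ℕ → A) : ℕ → A :=
  fun n => (δ (gstate δ ξ q n) (ξ n)).1

/-- The action of a state on a finite word. -/
def gactL (δ : Q → A → A × Q) : Q → List A → List A
  | _, [] => []
  | q, a :: w => (δ q a).1 :: gactL δ (δ q a).2 w

/-- The action of a state on a (finite or infinite) word. -/
def gact (δ : Q → A → A × Q) (q : Q) : Word A → Word A
  | .inl l => .inl (gactL δ q l)
  | .inr s => .inr (gactS δ q s)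

/-- The orbit `Q* ∘ x` of `x` under the semigroup action of the states. -/
def fwdOrbit (δ : Q → A → A × Q) (x : Word A) : Set (Word A) :=
  {y | Relation.ReflTransGen (fun y z => ∃ q : Q, gact δ q y = z) x y}

/-- The orbit `(Q ∪ Q̄)* ∘ x` of `x` under the action of the states and the inverse states
(an inverse state acts by taking the preimage under the corresponding state's action). -/
def fullOrbit (δ : Q → A → A × Q) (x : Word A) : Set (Word A) :=
  {y | Relation.ReflTransGen
    (fun y z => (∃ q : Q, gact δ q y = z) ∨ (∃ q : Q, gact δ q z = y)) x y}

lemma gactL_inj (δ : Q → A → A × Q) (hinv : ∀ q : Q, Function.Bijective fun a => (δ q a).1)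
    (q : Q) : Function.Injective (gactL δ q) := by
  intro l₁
  induction l₁ generalizing q with
  | nil =>
    intro l₂ h
    cases l₂ with
    | nil => rfl
    | cons b t => simp [gactL] at h
  | cons a t ih =>
    intro l₂ h
    cases l₂ with
    | nil => simp [gactL] at h
    | cons b t₂ =>
      simp only [gactL, List.cons.injEq] at h
      obtain ⟨h1, h2⟩ := h
      have hab : a = b := (hinv q).1 h1
      subst hab
      rw [ih _ h2]

lemma gstate_eq (δ : Q → A → A × Q) (hinv : ∀ q : Q, Function.Bijective fun a => (δ q a).1)
    (q : Q) (ξ η : ℕ → A) (h : gactS δ q ξ = gactS δ q η) :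
    ∀ n, gstate δ ξ q n = gstate δ η q n := by
  intro n
  induction n with
  | zero => rfl
  | succ n ih =>
    have hn : ξ n = η n := by
      have := congrFun h n
      simp only [gactS, ih] at this
      exact (hinv _).1 this
    simp [gstate, ih, hn]

lemma gactS_inj (δ : Q → A → A × Q) (hinv : ∀ q : Q, Function.Bijective fun a => (δ q a).1)
    (q : Q) : Function.Injective (gactS δ q) := by
  intro ξ η h
  funext n
  have hs := gstate_eq δ hinv q ξ η h n
  have := congrFun h n
  simp only [gactS, hs] at this
  exact (hinv _).1 this

lemma gact_inj (δ : Q → A → A × Q) (hinv : ∀ q : Q, Function.Bijective fun a => (δ q a).1)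
    (q : Q) : Function.Injective (gact δ q) := by
  intro x y h
  cases x <;> cases y <;> simp only [gact, Sum.inl.injEq, Sum.inr.injEq] at h ⊢
  · exact gactL_inj δ hinv q h
  · exact absurd h (by simp)
  · exact absurd h (by simp)
  · exact gactS_inj δ hinv q h

lemma fwdOrbit_closed (δ : Q → A → A × Q) (x : Word A) {y : Word A}
    (hy : y ∈ fwdOrbit δ x) (q : Q) : gact δ q y ∈ fwdOrbit δ x :=
  Relation.ReflTransGen.tail hy ⟨q, rfl⟩

theorem stmt0 [Fintype Q] [Fintype A] (δ : Q → A → A × Q)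
    (hinv : ∀ q : Q, Function.Bijective fun a => (δ q a).1) (x : Word A) :
    fwdOrbit δ x = fullOrbit δ x ∨
      ((fwdOrbit δ x).Infinite ∧ (fullOrbit δ x).Infinite) := by
  have hsub : fwdOrbit δ x ⊆ fullOrbit δ x := fun y hy =>
    Relation.ReflTransGen.mono (fun a b h => Or.inl h) _ _ hy
  by_cases hfin : (fwdOrbit δ x).Finite
  · left
    apply Set.Subset.antisymm hsub
    intro y hy
    induction hy with
    | refl => exact Relation.ReflTransGen.refl
    | tail _ step ih =>
      rcases step with ⟨q, rfl⟩ | ⟨q, hq⟩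
      · exact fwdOrbit_closed δ x ih q
      · -- gact δ q c = b, b ∈ fwdOrbit, show c ∈ fwdOrbit
        rename_i b c _
        have hmaps : Set.MapsTo (gact δ q) (fwdOrbit δ x) (fwdOrbit δ x) :=
          fun z hz => fwdOrbit_closed δ x hz q
        have hbij := (hfin.injOn_iff_bijOn_of_mapsTo hmaps).1
          ((gact_inj δ hinv q).injOn)
        obtain ⟨z, hz, hz2⟩ := hbij.surjOn (hq ▸ ih : gact δ q c ∈ fwdOrbit δ x)
        have : z = c := gact_inj δ hinv q hz2
        rwa [this] at hz
  · right
    exact ⟨hfin, fun h => hfin (h.subset hsub)⟩
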